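/- Let G = (B,E) be a graph on n vertices and k ≤ n. In the deleting-candidates destructive-control construction (candidates {c,w} ∪ B ∪ X ∪ Y ∪ Z with ‖X‖ = n² − Σ_i ‖N_c[b_i]‖, ‖Y‖ = n−1, ‖Z‖ = n−2, and 2n+1 voters: for each i one voter approving N_c[b_i] then a block X_i of n − ‖N_c[b_i]‖ fresh X-candidates then w; n voters approving Y then c; one voter approving Z then w then c), G has a dominating set of size at most k if and only if c can be prevented from being the unique fallback voting winner by deleting at most k candidates other than c. -/

import Mathlib

/- Fallback voting framework.  A ballot is the linearly ordered list of a voter's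
approved candidates (most preferred first); an election is a list of ballots. -/
namespace FV

variable {α : Type*} [DecidableEq α]

/-- The level-`i` score of candidate `c`: the number of voters who approve `c`
and rank `c` among their top `i` approved candidates. -/
def levelScore (V : List (List α)) (i : ℕ) (c : α) : ℕ :=
  (V.filter (fun b => decide (c ∈ b.take i))).length

/-- The overall approval score of candidate `c`. -/
def score (V : List (List α)) (c : α) : ℕ :=
  (V.filter (fun b => decide (c ∈ b))).length

/-- `c` has a strict majority of approvals at level `i`. -/
def MajAt (V : List (List α)) (i : ℕ) (c : α) : Prop :=
  2 * levelScore V i c > V.length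

/-- `c` is a fallback voting winner of the election with candidate set `Cs`
and voter list `V`:  either at the first level (up to `‖Cs‖`) at which some
candidate attains a strict majority, `c` has a strict majority and maximal
level score among strict-majority candidates; or no candidate ever attains a
strict majority and `c` has maximal overall approval score. -/
def FVWinner (Cs : Finset α) (V : List (List α)) (c : α) : Prop :=
  c ∈ Cs ∧
    ((∃ i, 1 ≤ i ∧ i ≤ Cs.card ∧ MajAt V i c ∧
        (∀ j, j < i → ∀ d ∈ Cs, ¬ MajAt V j d) ∧
        (∀ d ∈ Cs, MajAt V i d → levelScore V i d ≤ levelScore V i c)) ∨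
     ((∀ i, i ≤ Cs.card → ∀ d ∈ Cs, ¬ MajAt V i d) ∧
        ∀ d ∈ Cs, score V d ≤ score V c))

/-- `c` is the unique fallback voting winner. -/
def UniqueFVWinner (Cs : Finset α) (V : List (List α)) (c : α) : Prop :=
  FVWinner Cs V c ∧ ∀ d, FVWinner Cs V d → d = c

end FV

/- The deleting-candidates constructions.  Candidates: `{c,w} ∪ B ∪ X ∪ Y ∪ Z`
where `B` are the vertices of `G`, `X` is partitioned into blocks `Xᵢ` with
`‖N_c[bᵢ]‖ + ‖Xᵢ‖ = n` (so `‖X‖ = n² − Σᵢ ‖N_c[bᵢ]‖`), `‖Y‖ = n-1` and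
`‖Z‖ = n-2`.  `A i` enumerates the closed neighborhood `N_c[bᵢ]`.  Deleting a
candidate set `D` restricts every ballot to the remaining candidates. -/
namespace DC

variable {n : ℕ} (G : SimpleGraph (Fin n)) [DecidableRel G.Adj]

/-- The closed neighborhood of `i` in `G`, as a finset. -/
def ncl (i : Fin n) : Finset (Fin n) :=
  Finset.univ.filter (fun b => b = i ∨ G.Adj i b)

/-- Candidates: vertex candidates, the `X`-blocks, `Y`, `Z`, and `c`,`w`
(`Sum.inr … false` is `c`, `Sum.inr … true` is `w`). -/
abbrev Cand :=
  Sum (Fin n) (Sum ((i : Fin n) × Fin (n - (ncl G i).card))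
    (Sum (Fin (n - 1)) (Sum (Fin (n - 2)) Bool)))

def bC (b : Fin n) : Cand G := Sum.inl b
def xC (p : (i : Fin n) × Fin (n - (ncl G i).card)) : Cand G := Sum.inr (Sum.inl p)
def yC (j : Fin (n - 1)) : Cand G := Sum.inr (Sum.inr (Sum.inl j))
def zC (j : Fin (n - 2)) : Cand G := Sum.inr (Sum.inr (Sum.inr (Sum.inl j)))
def cC : Cand G := Sum.inr (Sum.inr (Sum.inr (Sum.inr false)))
def wC : Cand G := Sum.inr (Sum.inr (Sum.inr (Sum.inr true)))

/-- The block `Xᵢ`, in order. -/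
def Xlist (i : Fin n) : List (Cand G) :=
  (List.finRange (n - (ncl G i).card)).map (fun j => xC G ⟨i, j⟩)

def Ylist : List (Cand G) := (List.finRange (n - 1)).map (yC G)
def Zlist : List (Cand G) := (List.finRange (n - 2)).map (zC G)

/-- The first-group ballot of voter `i`: `N_c[bᵢ]` (in the order `A i`), then
the block `Xᵢ`, then `w`. -/
def ballot1 (A : Fin n → List (Fin n)) (i : Fin n) : List (Cand G) :=
  ((A i).map (bC G)) ++ Xlist G i ++ [wC G]

/-- Restricting a ballot after deleting the candidates in `D`. -/
def restrict (D : Finset (Cand G)) (b : List (Cand G)) : List (Cand G) :=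
  b.filter (fun a => decide (a ∉ D))

end DC

namespace DC

/-- The `2n+1` voters of the destructive deleting-candidates construction:
for each `i` the first-group ballot; `n` voters approving `Y` then `c`; one
voter approving `Z` then `w` then `c`. -/
def electionD {n : ℕ} (G : SimpleGraph (Fin n)) [DecidableRel G.Adj]
    (A : Fin n → List (Fin n)) : List (List (Cand G)) :=
  (List.finRange n).map (ballot1 G A) ++
    List.replicate n (Ylist G ++ [cC G]) ++
    [Zlist G ++ [wC G, cC G]]

end DC

/-! ### Auxiliary development -/

section TakeLemmas
open List

variable {α : Type*}

theorem aux_mem_take_middle (a : α) (M L : List α) (ha : a ∉ M) (i : ℕ) :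
    a ∈ (M ++ a :: L).take i ↔ M.length < i := by
  rw [List.take_append]
  constructor
  · intro h
    rcases List.mem_append.1 h with h | h
    · exact absurd (List.mem_of_mem_take h) ha
    · rcases Nat.lt_or_ge M.length i with h' | h'
      · exact h'
      · rw [Nat.sub_eq_zero_of_le h'] at h; simp at h
  · intro h
    have hne : i - M.length ≠ 0 := by omega
    rcases Nat.exists_eq_succ_of_ne_zero hne with ⟨m, hm⟩
    rw [hm]
    simp

end TakeLemmas

namespace DC
open List

variable {n : ℕ} (G : SimpleGraph (Fin n)) [DecidableRel G.Adj]
variable (A : Fin n → List (Fin n)) (D : Finset (Cand G))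

/-- length of the restricted non-`w` part of the first-group ballot `j`. -/
def mB (j : Fin n) : ℕ := (restrict G D ((A j).map (bC G) ++ Xlist G j)).length

def yD : ℕ := (restrict G D (Ylist G)).length

def zD : ℕ := (restrict G D (Zlist G)).length

def wbit : ℕ := if wC G ∈ D then 0 else 1

instance : BEq (Cand G) := instBEqOfDecidableEq
instance : LawfulBEq (Cand G) := instLawfulBEq

lemma restrict_append (l₁ l₂ : List (Cand G)) :
    restrict G D (l₁ ++ l₂) = restrict G D l₁ ++ restrict G D l₂ :=
  List.filter_append _ _

lemma mem_restrict {a : Cand G} {l : List (Cand G)} :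
    a ∈ restrict G D l ↔ a ∈ l ∧ a ∉ D := by
  simp [restrict]

lemma restrict_singleton_not_mem {a : Cand G} (h : a ∉ D) :
    restrict G D [a] = [a] := by simp [restrict, h]

lemma cC_not_mem_ballot1 (j : Fin n) : cC G ∉ ballot1 G A j := by
  simp [ballot1, cC, bC, Xlist, xC, wC]

lemma cC_not_mem_Ylist : cC G ∉ Ylist G := by simp [Ylist, yC, cC]

lemma cC_not_mem_Zlist : cC G ∉ Zlist G := by simp [Zlist, zC, cC]

lemma wC_not_mem_Ylist : wC G ∉ Ylist G := by simp [Ylist, yC, wC]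

lemma wC_not_mem_Zlist : wC G ∉ Zlist G := by simp [Zlist, zC, wC]

lemma wC_not_mem_part (j : Fin n) : wC G ∉ (A j).map (bC G) ++ Xlist G j := by
  simp [Xlist, xC, wC, bC]

lemma wC_ne_cC : wC G ≠ cC G := by simp [wC, cC]

/-- Membership of `c` in the top `i` of a restricted `Y`-voter ballot. -/
lemma c_mem_Y_take (hc : cC G ∉ D) (i : ℕ) :
    cC G ∈ (restrict G D (Ylist G ++ [cC G])).take i ↔ yD G D < i := by
  rw [restrict_append, restrict_singleton_not_mem G D hc]
  exact aux_mem_take_middle _ _ _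
    (fun h => cC_not_mem_Ylist G ((mem_restrict G D).1 h).1) i

/-- Membership of `c` in the top `i` of the restricted `Z`-voter ballot. -/
lemma c_mem_Z_take (hc : cC G ∉ D) (i : ℕ) :
    cC G ∈ (restrict G D (Zlist G ++ [wC G, cC G])).take i ↔
      zD G D + wbit G D < i := by
  have h2 : Zlist G ++ [wC G, cC G] = (Zlist G ++ [wC G]) ++ [cC G] := by simp
  rw [h2, restrict_append, restrict_singleton_not_mem G D hc]
  have hnm : cC G ∉ restrict G D (Zlist G ++ [wC G]) := by
    intro h
    rcases List.mem_append.1 ((mem_restrict G D).1 h).1 with h | h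
    · exact cC_not_mem_Zlist G h
    · simp at h; exact wC_ne_cC G h.symm
  rw [aux_mem_take_middle _ _ _ hnm i, restrict_append]
  have hlen : (restrict G D [wC G]).length = wbit G D := by
    unfold wbit restrict
    by_cases hw : wC G ∈ D <;> simp [hw]
  rw [List.length_append, hlen]
  rfl

/-- Membership of `w` in the top `i` of the restricted `Z`-voter ballot. -/
lemma w_mem_Z_take (hc : cC G ∉ D) (hw : wC G ∉ D) (i : ℕ) :
    wC G ∈ (restrict G D (Zlist G ++ [wC G, cC G])).take i ↔ zD G D < i := by
  have h2 : restrict G D (Zlist G ++ [wC G, cC G]) =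
      restrict G D (Zlist G) ++ wC G :: [cC G] := by
    rw [restrict_append]
    congr 1
    simp [restrict, hw, hc]
  rw [h2]
  exact aux_mem_take_middle _ _ _
    (fun h => wC_not_mem_Zlist G ((mem_restrict G D).1 h).1) i

lemma w_not_mem_Z_take (hw : wC G ∈ D) (i : ℕ) :
    wC G ∉ (restrict G D (Zlist G ++ [wC G, cC G])).take i := by
  intro h
  exact ((mem_restrict G D).1 (List.mem_of_mem_take h)).2 hw

/-- Membership of `w` in the top `i` of a restricted first-group ballot. -/
lemma w_mem_ballot1_take (hw : wC G ∉ D) (i : ℕ) (j : Fin n) :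
    wC G ∈ (restrict G D (ballot1 G A j)).take i ↔ mB G A D j < i := by
  have h2 : ballot1 G A j = ((A j).map (bC G) ++ Xlist G j) ++ [wC G] := by
    simp [ballot1]
  rw [h2, restrict_append, restrict_singleton_not_mem G D hw]
  exact aux_mem_take_middle _ _ _
    (fun h => wC_not_mem_part G A j ((mem_restrict G D).1 h).1) i

lemma w_not_mem_ballot1_take (hw : wC G ∈ D) (i : ℕ) (j : Fin n) :
    wC G ∉ (restrict G D (ballot1 G A j)).take i := by
  intro h
  exact ((mem_restrict G D).1 (List.mem_of_mem_take h)).2 hw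

lemma c_not_mem_ballot1_take (i : ℕ) (j : Fin n) :
    cC G ∉ (restrict G D (ballot1 G A j)).take i := by
  intro h
  exact cC_not_mem_ballot1 G A j ((mem_restrict G D).1 (List.mem_of_mem_take h)).1

lemma w_not_mem_Y_take (i : ℕ) :
    wC G ∉ (restrict G D (Ylist G ++ [cC G])).take i := by
  intro h
  rcases List.mem_append.1 ((mem_restrict G D).1 (List.mem_of_mem_take h)).1 with h | h
  · exact wC_not_mem_Ylist G h
  · simp at h; exact wC_ne_cC G h

/-- The number of voters. -/
lemma length_V : ((electionD G A).map (restrict G D)).length = 2 * n + 1 := by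
  simp [electionD]; omega

/-- Explicit formula for level scores in the restricted election. -/
lemma levelScore_eq (i : ℕ) (a : Cand G) :
    FV.levelScore ((electionD G A).map (restrict G D)) i a =
      (List.finRange n).countP
          (fun j => decide (a ∈ (restrict G D (ballot1 G A j)).take i))
      + n * (if a ∈ (restrict G D (Ylist G ++ [cC G])).take i then 1 else 0)
      + (if a ∈ (restrict G D (Zlist G ++ [wC G, cC G])).take i then 1 else 0) := by
  unfold FV.levelScore electionD
  rw [← List.countP_eq_length_filter]
  rw [List.map_append, List.map_append, List.countP_append, List.countP_append,
    List.map_map, List.countP_map, List.map_replicate, List.countP_replicate]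
  simp only [List.map_cons, List.map_nil, List.countP_cons, List.countP_nil,
    Function.comp, decide_eq_true_eq]
  split_ifs <;> simp <;> rfl

/-- Explicit formula for approval scores in the restricted election. -/
lemma score_eq (a : Cand G) :
    FV.score ((electionD G A).map (restrict G D)) a =
      (List.finRange n).countP
          (fun j => decide (a ∈ restrict G D (ballot1 G A j)))
      + n * (if a ∈ restrict G D (Ylist G ++ [cC G]) then 1 else 0)
      + (if a ∈ restrict G D (Zlist G ++ [wC G, cC G]) then 1 else 0) := by
  unfold FV.score electionD
  rw [← List.countP_eq_length_filter]
  rw [List.map_append, List.map_append, List.countP_append, List.countP_append,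
    List.map_map, List.countP_map, List.map_replicate, List.countP_replicate]
  simp only [List.map_cons, List.map_nil, List.countP_cons, List.countP_nil,
    Function.comp, decide_eq_true_eq]
  split_ifs <;> simp <;> rfl

lemma levelScore_le_score (V : List (List (Cand G))) (i : ℕ) (a : Cand G) :
    FV.levelScore V i a ≤ FV.score V a := by
  unfold FV.levelScore FV.score
  rw [← List.countP_eq_length_filter, ← List.countP_eq_length_filter]
  refine List.countP_mono_left fun b _ h => ?_
  simp only [decide_eq_true_eq] at h ⊢
  exact List.mem_of_mem_take h

end DC

namespace DC
open List

variable {n : ℕ} (G : SimpleGraph (Fin n)) [DecidableRel G.Adj]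
variable (A : Fin n → List (Fin n)) (D : Finset (Cand G))

lemma majAt_c (hn : 1 ≤ n) (hc : cC G ∉ D) (i : ℕ) :
    FV.MajAt ((electionD G A).map (restrict G D)) i (cC G) ↔
      yD G D < i ∧ zD G D + wbit G D < i := by
  unfold FV.MajAt
  rw [length_V, levelScore_eq]
  have h0 : (List.finRange n).countP
      (fun j => decide (cC G ∈ (restrict G D (ballot1 G A j)).take i)) = 0 :=
    List.countP_eq_zero.2 fun j _ => by
      simpa using c_not_mem_ballot1_take G A D i j
  rw [h0]
  simp only [c_mem_Y_take G D hc, c_mem_Z_take G D hc]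
  split_ifs <;> omega

lemma majAt_w (hc : cC G ∉ D) (i : ℕ) :
    FV.MajAt ((electionD G A).map (restrict G D)) i (wC G) ↔
      wC G ∉ D ∧ zD G D < i ∧ ∀ j, mB G A D j < i := by
  unfold FV.MajAt
  rw [length_V, levelScore_eq]
  by_cases hw : wC G ∈ D
  · have h0 : (List.finRange n).countP
        (fun j => decide (wC G ∈ (restrict G D (ballot1 G A j)).take i)) = 0 :=
      List.countP_eq_zero.2 fun j _ => by
        simpa using w_not_mem_ballot1_take G A D hw i j
    rw [h0, if_neg (w_not_mem_Y_take G D i), if_neg (w_not_mem_Z_take G D hw i)]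
    simp [hw]
  · simp only [w_mem_ballot1_take G A D hw, w_mem_Z_take G D hc hw,
      if_neg (w_not_mem_Y_take G D i)]
    have hle : (List.finRange n).countP (fun j => decide (mB G A D j < i)) ≤ n := by
      refine le_trans List.countP_le_length ?_
      simp
    have hiff : (List.finRange n).countP (fun j => decide (mB G A D j < i)) = n ↔
        ∀ j, mB G A D j < i := by
      have h := List.countP_eq_length
        (l := List.finRange n) (p := fun j => decide (mB G A D j < i))
      simp only [List.length_finRange, List.mem_finRange, decide_eq_true_eq,
        true_implies] at h
      exact h
    constructor
    · intro h
      split_ifs at h with hz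
      · have hcnt : (List.finRange n).countP (fun j => decide (mB G A D j < i)) = n := by
          omega
        exact ⟨hw, hz, hiff.1 hcnt⟩
      · omega
    · rintro ⟨-, hz, hm⟩
      rw [if_pos hz, hiff.2 hm]
      omega

lemma mem_Yballot_elim {a : Cand G} (h : a ∈ restrict G D (Ylist G ++ [cC G])) :
    (∃ j, a = yC G j) ∨ a = cC G := by
  rcases List.mem_append.1 ((mem_restrict G D).1 h).1 with h | h
  · simp only [Ylist, List.mem_map] at h
    obtain ⟨j, -, rfl⟩ := h
    exact Or.inl ⟨j, rfl⟩
  · simp at h; exact Or.inr h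

lemma mem_Zballot_elim {a : Cand G} (h : a ∈ restrict G D (Zlist G ++ [wC G, cC G])) :
    (∃ j, a = zC G j) ∨ a = wC G ∨ a = cC G := by
  rcases List.mem_append.1 ((mem_restrict G D).1 h).1 with h | h
  · simp only [Zlist, List.mem_map] at h
    obtain ⟨j, -, rfl⟩ := h
    exact Or.inl ⟨j, rfl⟩
  · simp at h; exact Or.inr h

lemma mem_ballot1_elim {a : Cand G} {j : Fin n}
    (h : a ∈ restrict G D (ballot1 G A j)) :
    (∃ b, a = bC G b) ∨ (∃ p, a = xC G p) ∨ a = wC G := by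
  have h' := ((mem_restrict G D).1 h).1
  simp only [ballot1, List.mem_append, List.mem_map, Xlist, List.mem_cons,
    List.not_mem_nil, or_false] at h'
  rcases h' with (⟨b, -, rfl⟩ | ⟨t, -, rfl⟩) | h'
  · exact Or.inl ⟨b, rfl⟩
  · exact Or.inr (Or.inl ⟨_, rfl⟩)
  · exact Or.inr (Or.inr h')

lemma not_majAt_other (hn : 1 ≤ n) (i : ℕ) (d : Cand G) (hdc : d ≠ cC G)
    (hdw : d ≠ wC G) : ¬ FV.MajAt ((electionD G A).map (restrict G D)) i d := by
  intro h
  unfold FV.MajAt at h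
  rw [length_V] at h
  have h1 := levelScore_le_score G ((electionD G A).map (restrict G D)) i d
  have h2 : FV.score ((electionD G A).map (restrict G D)) d ≤ n := by
    rw [score_eq]
    have hcnt : (List.finRange n).countP
        (fun j => decide (d ∈ restrict G D (ballot1 G A j))) ≤ n := by
      refine le_trans List.countP_le_length ?_
      simp
    have hcnt0 : ((∃ j, d = yC G j) ∨ (∃ j, d = zC G j)) →
        (List.finRange n).countP
          (fun j => decide (d ∈ restrict G D (ballot1 G A j))) = 0 := by
      intro hd
      refine List.countP_eq_zero.2 fun j _ => by
        simp only [decide_eq_true_eq]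
        intro hmem
        rcases mem_ballot1_elim G A D hmem with ⟨b, rfl⟩ | ⟨p, rfl⟩ | rfl
        · rcases hd with ⟨j', hj'⟩ | ⟨j', hj'⟩ <;> simp [bC, yC, zC] at hj'
        · rcases hd with ⟨j', hj'⟩ | ⟨j', hj'⟩ <;> simp [xC, yC, zC] at hj'
        · rcases hd with ⟨j', hj'⟩ | ⟨j', hj'⟩ <;> simp [wC, yC, zC] at hj'
    have hY : d ∉ restrict G D (Ylist G ++ [cC G]) ∨
        (List.finRange n).countP
          (fun j => decide (d ∈ restrict G D (ballot1 G A j))) = 0 := by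
      by_cases hmem : d ∈ restrict G D (Ylist G ++ [cC G])
      · rcases mem_Yballot_elim G D hmem with ⟨j', rfl⟩ | rfl
        · exact Or.inr (hcnt0 (Or.inl ⟨j', rfl⟩))
        · exact absurd rfl hdc
      · exact Or.inl hmem
    have hZ : d ∉ restrict G D (Zlist G ++ [wC G, cC G]) ∨
        ((List.finRange n).countP
          (fun j => decide (d ∈ restrict G D (ballot1 G A j))) = 0 ∧
          d ∉ restrict G D (Ylist G ++ [cC G])) := by
      by_cases hmem : d ∈ restrict G D (Zlist G ++ [wC G, cC G])
      · rcases mem_Zballot_elim G D hmem with ⟨j', rfl⟩ | rfl | rfl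
        · refine Or.inr ⟨hcnt0 (Or.inr ⟨j', rfl⟩), fun hy => ?_⟩
          rcases mem_Yballot_elim G D hy with ⟨j'', hj''⟩ | hj'' <;>
            simp [yC, zC, cC] at hj''
        · exact absurd rfl hdw
        · exact absurd rfl hdc
      · exact Or.inl hmem
    rcases hY with hY | hY <;> rcases hZ with hZ | hZ
    · rw [if_neg hY, if_neg hZ]; omega
    · rw [hZ.1, if_neg (hZ.2)]; split_ifs <;> omega
    · rw [hY, if_neg hZ]; split_ifs <;> omega
    · rw [hZ.1, if_neg (hZ.2)]; split_ifs <;> omega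
  omega

end DC

namespace DC
open List

variable {n : ℕ} (G : SimpleGraph (Fin n)) [DecidableRel G.Adj]
variable (A : Fin n → List (Fin n)) (D : Finset (Cand G))

lemma yD_le : yD G D ≤ n - 1 := by
  unfold yD restrict
  refine le_trans (List.length_filter_le _ _) ?_
  simp [Ylist]

lemma zD_le : zD G D ≤ n - 2 := by
  unfold zD restrict
  refine le_trans (List.length_filter_le _ _) ?_
  simp [Zlist]

lemma wbit_le : wbit G D ≤ 1 := by
  unfold wbit; split <;> omega

lemma len_part (hAnd : ∀ i, (A i).Nodup)
    (hAmem : ∀ i b, b ∈ A i ↔ (b = i ∨ G.Adj i b)) (j : Fin n) :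
    ((A j).map (bC G) ++ Xlist G j).length = n := by
  have h1 : (A j).length = (ncl G j).card := by
    rw [← List.toFinset_card_of_nodup (hAnd j)]
    congr 1
    ext b
    simp [hAmem, ncl]
  have h2 : (ncl G j).card ≤ n := le_trans (Finset.card_le_univ _) (by simp)
  simp only [List.length_append, List.length_map, Xlist, h1]
  simp only [List.length_map, List.length_finRange]
  omega

lemma exists_deleted (hAnd : ∀ i, (A i).Nodup)
    (hAmem : ∀ i b, b ∈ A i ↔ (b = i ∨ G.Adj i b)) (j : Fin n)
    (h : mB G A D j < n) :
    ∃ a ∈ (A j).map (bC G) ++ Xlist G j, a ∈ D := by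
  have hlen := len_part G A hAnd hAmem j
  by_contra hno
  push_neg at hno
  have heq : restrict G D ((A j).map (bC G) ++ Xlist G j) =
      (A j).map (bC G) ++ Xlist G j :=
    List.filter_eq_self.2 fun a ha => by simpa using hno a ha
  unfold mB at h
  rw [heq, hlen] at h
  omega

lemma card_Cs (hn : 3 ≤ n) (hD : D.card ≤ n) :
    n + 1 ≤ (Finset.univ \ D).card := by
  rw [Finset.card_sdiff_of_subset (Finset.subset_univ D), Finset.card_univ]
  have hcard : Fintype.card (Cand G) =
      n + ((∑ i : Fin n, (n - (ncl G i).card)) + ((n - 1) + ((n - 2) + 2))) := by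
    simp [Fintype.card_sigma]
  omega

lemma levelScore_c_top (hc : cC G ∉ D) (i : ℕ) (hy : yD G D < i)
    (hz : zD G D + wbit G D < i) :
    FV.levelScore ((electionD G A).map (restrict G D)) i (cC G) = n + 1 := by
  rw [levelScore_eq]
  have h0 : (List.finRange n).countP
      (fun j => decide (cC G ∈ (restrict G D (ballot1 G A j)).take i)) = 0 :=
    List.countP_eq_zero.2 fun j _ => by
      simpa using c_not_mem_ballot1_take G A D i j
  rw [h0, if_pos ((c_mem_Y_take G D hc i).2 hy), if_pos ((c_mem_Z_take G D hc i).2 hz)]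
  ring

lemma levelScore_w_top (hc : cC G ∉ D) (hw : wC G ∉ D) (i : ℕ)
    (hz : zD G D < i) (hm : ∀ j, mB G A D j < i) :
    FV.levelScore ((electionD G A).map (restrict G D)) i (wC G) = n + 1 := by
  rw [levelScore_eq]
  simp only [w_mem_ballot1_take G A D hw]
  have hcount : (List.finRange n).countP (fun j => decide (mB G A D j < i)) = n := by
    have h := List.countP_eq_length
      (l := List.finRange n) (p := fun j => decide (mB G A D j < i))
    simp only [List.length_finRange, List.mem_finRange, decide_eq_true_eq,
      true_implies] at h
    exact h.2 hm
  rw [hcount, if_neg (w_not_mem_Y_take G D i),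
    if_pos ((w_mem_Z_take G D hc hw i).2 hz)]
  ring

/-- Central lemma: if `w` is deleted, or some first-group ballot retains a long
non-`w` part, then `c` remains the unique fallback winner. -/
lemma unique_of_blocked (hn : 3 ≤ n) (hc : cC G ∉ D) (hDcard : D.card ≤ n)
    (H : wC G ∈ D ∨ ∃ j, max (yD G D) (zD G D + wbit G D) < mB G A D j) :
    FV.UniqueFVWinner (Finset.univ \ D)
      ((electionD G A).map (restrict G D)) (cC G) := by
  set V := (electionD G A).map (restrict G D) with hV
  set L := max (yD G D) (zD G D + wbit G D) + 1 with hL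
  have hn1 : 1 ≤ n := by omega
  have hyd := yD_le G D
  have hzd := zD_le G D
  have hwb := wbit_le G D
  have hLn : L ≤ n := by omega
  have hcard := card_Cs G D hn hDcard
  have hMc : FV.MajAt V L (cC G) := (majAt_c G A D hn1 hc L).2 ⟨by omega, by omega⟩
  have hcCs : cC G ∈ Finset.univ \ D := by simp [hc]
  have noW : ∀ j', j' ≤ L → ¬ FV.MajAt V j' (wC G) := by
    intro j' hj' hmaj
    obtain ⟨hw, hz, hm⟩ := (majAt_w G A D hc j').1 hmaj
    rcases H with H | ⟨j0, hj0⟩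
    · exact hw H
    · have := hm j0; omega
  have noBefore : ∀ j' d, j' < L → ¬ FV.MajAt V j' d := by
    intro j' d hj' hmaj
    rcases d with b | p | j | j | bb
    · exact not_majAt_other G A D hn1 j' _ (by simp [bC, cC]) (by simp [bC, wC]) hmaj
    · exact not_majAt_other G A D hn1 j' _ (by simp [xC, cC]) (by simp [xC, wC]) hmaj
    · exact not_majAt_other G A D hn1 j' _ (by simp [yC, cC]) (by simp [yC, wC]) hmaj
    · exact not_majAt_other G A D hn1 j' _ (by simp [zC, cC]) (by simp [zC, wC]) hmaj
    · cases bb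
      · obtain ⟨h1, h2⟩ := (majAt_c G A D hn1 hc j').1 hmaj
        omega
      · exact noW j' (by omega) hmaj
  have hmaxim : ∀ d ∈ Finset.univ \ D, FV.MajAt V L d →
      FV.levelScore V L d ≤ FV.levelScore V L (cC G) := by
    intro d _ hmaj
    rcases d with b | p | j | j | bb
    · exact absurd hmaj (not_majAt_other G A D hn1 L _ (by simp [bC, cC]) (by simp [bC, wC]))
    · exact absurd hmaj (not_majAt_other G A D hn1 L _ (by simp [xC, cC]) (by simp [xC, wC]))
    · exact absurd hmaj (not_majAt_other G A D hn1 L _ (by simp [yC, cC]) (by simp [yC, wC]))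
    · exact absurd hmaj (not_majAt_other G A D hn1 L _ (by simp [zC, cC]) (by simp [zC, wC]))
    · cases bb
      · exact le_rfl
      · exact absurd hmaj (noW L le_rfl)
  have hwinc : FV.FVWinner (Finset.univ \ D) V (cC G) :=
    ⟨hcCs, Or.inl ⟨L, by omega, by omega, hMc,
      fun j hj d _ => noBefore j d hj, hmaxim⟩⟩
  refine ⟨hwinc, ?_⟩
  intro d hd
  rcases hd with ⟨hdCs, ⟨i, hi1, hiCs, hmaj, hearly, -⟩ | ⟨hno, -⟩⟩
  swap
  · exact absurd hMc (hno L (by omega) (cC G) hcCs)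
  rcases d with b | p | j | j | bb
  · exact absurd hmaj (not_majAt_other G A D hn1 i _ (by simp [bC, cC]) (by simp [bC, wC]))
  · exact absurd hmaj (not_majAt_other G A D hn1 i _ (by simp [xC, cC]) (by simp [xC, wC]))
  · exact absurd hmaj (not_majAt_other G A D hn1 i _ (by simp [yC, cC]) (by simp [yC, wC]))
  · exact absurd hmaj (not_majAt_other G A D hn1 i _ (by simp [zC, cC]) (by simp [zC, wC]))
  · cases bb
    · rfl
    · rcases Nat.lt_or_ge L i with hLi | hLi
      · exact absurd hMc (hearly L hLi (cC G) hcCs)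
      · exact absurd hmaj (noW i hLi)

lemma restrict_eq_self {l : List (Cand G)} (h : ∀ a ∈ l, a ∉ D) :
    restrict G D l = l :=
  List.filter_eq_self.2 fun a ha => by simpa using h a ha

end DC
/-- in the deleting-candidates destructive construction, `G`
has a dominating set of size at most `k` iff `c` can be prevented from being
the unique fallback voting winner by deleting at most `k` candidates other
than `c`. -/
theorem fv_destructive_deleting_candidates {n k : ℕ} (hn : 3 ≤ n)
    (hk : 0 < k) (hkn : k ≤ n)
    (G : SimpleGraph (Fin n)) [DecidableRel G.Adj]
    (A : Fin n → List (Fin n))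
    (hAnd : ∀ i, (A i).Nodup)
    (hAmem : ∀ i b, b ∈ A i ↔ (b = i ∨ G.Adj i b)) :
    (∃ B' : Finset (Fin n), B'.card ≤ k ∧ ∀ u, ∃ v ∈ B', u = v ∨ G.Adj v u) ↔
    (∃ D : Finset (DC.Cand G), DC.cC G ∉ D ∧ D.card ≤ k ∧
      ¬ FV.UniqueFVWinner (Finset.univ \ D)
          ((DC.electionD G A).map (DC.restrict G D)) (DC.cC G)) := by
  open DC in
  constructor
  · rintro ⟨B', hBk, hdom⟩
    refine ⟨B'.image (bC G), by simp [bC, cC], le_trans Finset.card_image_le hBk, ?_⟩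
    intro hU
    set D := B'.image (bC G) with hD
    set V := (electionD G A).map (restrict G D) with hV
    have hc : cC G ∉ D := by simp [hD, bC, cC]
    have hw : wC G ∉ D := by simp [hD, bC, wC]
    have hyD : yD G D = n - 1 := by
      unfold yD
      rw [restrict_eq_self G D ?_]
      · simp [Ylist]
      · intro a ha haD
        simp only [Ylist, List.mem_map] at ha
        obtain ⟨j, -, rfl⟩ := ha
        simp [hD, yC, bC] at haD
    have hzD : zD G D = n - 2 := by
      unfold zD
      rw [restrict_eq_self G D ?_]
      · simp [Zlist]
      · intro a ha haD
        simp only [Zlist, List.mem_map] at ha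
        obtain ⟨j, -, rfl⟩ := ha
        simp [hD, zC, bC] at haD
    have hwbit : wbit G D = 1 := by unfold wbit; rw [if_neg hw]
    have hmB : ∀ j, mB G A D j < n := by
      intro j
      obtain ⟨v, hvB, hv⟩ := hdom j
      have hvA : v ∈ A j := (hAmem j v).2 (by
        rcases hv with rfl | h
        · exact Or.inl rfl
        · exact Or.inr (G.adj_symm h))
      have hmem : bC G v ∈ (A j).map (bC G) ++ Xlist G j :=
        List.mem_append_left _ (List.mem_map_of_mem hvA)
      have hlen := len_part G A hAnd hAmem j
      unfold mB
      have hlt : (restrict G D ((A j).map (bC G) ++ Xlist G j)).length <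
          ((A j).map (bC G) ++ Xlist G j).length :=
        List.length_filter_lt_length_iff_exists.2 ⟨bC G v, hmem, by
          simp only [decide_eq_true_eq, not_not]
          exact Finset.mem_image_of_mem _ hvB⟩
      omega
    have hDn : D.card ≤ n := le_trans (le_trans Finset.card_image_le hBk) hkn
    have hcard := card_Cs G D hn hDn
    have hMw : FV.MajAt V n (wC G) :=
      (majAt_w G A D hc n).2 ⟨hw, by omega, hmB⟩
    have hMc : FV.MajAt V n (cC G) :=
      (majAt_c G A D (by omega) hc n).2 ⟨by omega, by omega⟩
    have hwCs : wC G ∈ Finset.univ \ D := by simp [hw]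
    obtain ⟨hwinc, huniq⟩ := hU
    obtain ⟨-, hbr⟩ := hwinc
    rcases hbr with ⟨i₀, hi1, hiCs, hMci, hearly, -⟩ | ⟨hno, -⟩
    swap
    · exact hno n (by omega) (wC G) hwCs hMw
    have hyi : yD G D < i₀ := ((majAt_c G A D (by omega) hc i₀).1 hMci).1
    have hi0 : i₀ = n := by
      rcases Nat.lt_or_ge n i₀ with hlt | hge
      · exact absurd hMw (hearly n hlt (wC G) hwCs)
      · omega
    rw [hi0] at hiCs hearly hi1
    have hsw : FV.levelScore V n (wC G) = n + 1 :=
      levelScore_w_top G A D hc hw n (by omega) hmB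
    have hsc : FV.levelScore V n (cC G) = n + 1 :=
      levelScore_c_top G A D hc n (by omega) (by omega)
    have hwwin : FV.FVWinner (Finset.univ \ D) V (wC G) := by
      refine ⟨hwCs, Or.inl ⟨n, hi1, hiCs, hMw, hearly, ?_⟩⟩
      intro d hd hmaj
      rcases d with b | p | j | j | bb
      · exact absurd hmaj (not_majAt_other G A D (by omega) n _
          (by simp [bC, cC]) (by simp [bC, wC]))
      · exact absurd hmaj (not_majAt_other G A D (by omega) n _
          (by simp [xC, cC]) (by simp [xC, wC]))
      · exact absurd hmaj (not_majAt_other G A D (by omega) n _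
          (by simp [yC, cC]) (by simp [yC, wC]))
      · exact absurd hmaj (not_majAt_other G A D (by omega) n _
          (by simp [zC, cC]) (by simp [zC, wC]))
      · cases bb
        · show FV.levelScore V n (cC G) ≤ FV.levelScore V n (wC G)
          omega
        · exact le_rfl
    exact wC_ne_cC G (huniq (wC G) hwwin)
  · rintro ⟨D, hc, hk', hnu⟩
    have hDn : D.card ≤ n := le_trans hk' hkn
    have hblock : ¬ (wC G ∈ D ∨
        ∃ j, max (yD G D) (zD G D + wbit G D) < mB G A D j) :=
      fun H => hnu (unique_of_blocked G A D hn hc hDn H)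
    push_neg at hblock
    obtain ⟨hw, hall⟩ := hblock
    have hyd := yD_le G D
    have hzd := zD_le G D
    have hwb := wbit_le G D
    have hmBlt : ∀ j, mB G A D j < n := by
      intro j; have := hall j; omega
    have hn0 : 0 < n := by omega
    refine ⟨D.image (fun a => Sum.elim id
      (Sum.elim Sigma.fst (fun _ => (⟨0, hn0⟩ : Fin n))) a),
      le_trans Finset.card_image_le hk', ?_⟩
    intro u
    obtain ⟨a, ha, haD⟩ := exists_deleted G A D hAnd hAmem u (hmBlt u)
    rcases List.mem_append.1 ha with ha | ha
    · obtain ⟨b, hbA, rfl⟩ := List.mem_map.1 ha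
      refine ⟨b, Finset.mem_image.2 ⟨_, haD, rfl⟩, ?_⟩
      rcases (hAmem u b).1 hbA with rfl | hadj
      · exact Or.inl rfl
      · exact Or.inr (G.adj_symm hadj)
    · simp only [Xlist, List.mem_map] at ha
      obtain ⟨t, -, rfl⟩ := ha
      exact ⟨u, Finset.mem_image.2 ⟨_, haD, rfl⟩, Or.inl rfl⟩
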